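/- Let T be a tree and M a submonoid of Emb(T). Then the limit set L(M) has either zero, one, two, or infinitely many elements; in particular it cannot be finite with three or more elements. -/

import Mathlib

open SimpleGraph

variable {V : Type*}

/-- `g` is a self-embedding of `G`: injective and adjacency-preserving. -/
def IsEmb (G : SimpleGraph V) (g : V → V) : Prop :=
  Function.Injective g ∧ ∀ u v : V, G.Adj u v → G.Adj (g u) (g v)

/-- A ray in `G`: a one-way infinite path. -/
structure GRay (G : SimpleGraph V) where
  f : ℕ → V
  inj : Function.Injective f
  adj : ∀ n, G.Adj (f n) (f (n + 1))

/-- Two rays are equivalent (lie in the same end): for every vertex `v` they have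
tails avoiding `v` lying in the same component of `G − v`. -/
def RayEquiv (G : SimpleGraph V) (R S : GRay G) : Prop :=
  ∀ v : V, ∃ m n : ℕ, (∀ i, m ≤ i → R.f i ≠ v) ∧ (∀ j, n ≤ j → S.f j ≠ v) ∧
    ∃ w : G.Walk (R.f m) (S.f n), v ∉ w.support

/-- `g` fixes the end represented by the ray `R`: the image ray is equivalent to `R`. -/
def FixesEnd (G : SimpleGraph V) (g : V → V) (R : GRay G) : Prop :=
  ∃ S : GRay G, (∀ n, S.f n = g (R.f n)) ∧ RayEquiv G S R

def FixesVertex (g : V → V) : Prop := ∃ v, g v = v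

/-- `g` fixes an edge setwise (possibly swapping its endpoints). -/
def FixesEdge (G : SimpleGraph V) (g : V → V) : Prop :=
  ∃ u v : V, G.Adj u v ∧ ((g u = u ∧ g v = v) ∨ (g u = v ∧ g v = u))

/-- `g` fixes setwise a non-empty finite subtree of `G`. -/
def FixesFiniteSubtree (G : SimpleGraph V) (g : V → V) : Prop :=
  ∃ S : Set V, S.Nonempty ∧ S.Finite ∧ (G.induce S).Connected ∧ g '' S = S

/-- `R` is a ray with `g(R) ⊆ R`; for non-elliptic `g` its end is the direction `g⁺`. -/
def DirectionRay (G : SimpleGraph V) (g : V → V) (R : GRay G) : Prop :=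
  ∀ n, ∃ m, g (R.f n) = R.f m

/-- `w` lies in the component of `G − x` containing the end of `R`. -/
def InComp (G : SimpleGraph V) (x : V) (R : GRay G) (w : V) : Prop :=
  ∃ m, (∀ i, m ≤ i → R.f i ≠ x) ∧ ∃ p : G.Walk w (R.f m), x ∉ p.support

/-- A sequence of vertices converges to the end represented by `R`. -/
def ConvergesTo (G : SimpleGraph V) (x : ℕ → V) (R : GRay G) : Prop :=
  ∀ v : V, ∃ N : ℕ, ∀ n, N ≤ n → InComp G v R (x n)

/-- `M` is a submonoid of `Emb(G)`. -/
def IsEmbMonoid (G : SimpleGraph V) (M : Set (V → V)) : Prop :=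
  (∀ g ∈ M, IsEmb G g) ∧ (id ∈ M) ∧ ∀ g ∈ M, ∀ h ∈ M, (g ∘ h) ∈ M

/-- The end of `R` is an accumulation point of the orbit of `v0` under `M`:
every basic neighbourhood of the end of `R` meets the orbit. -/
def InLimitSet (G : SimpleGraph V) (M : Set (V → V)) (v0 : V) (R : GRay G) : Prop :=
  ∀ x : V, ∃ g ∈ M, InComp G x R (g v0)

section Aux

variable {G : SimpleGraph V}

/-- connectivity through the complement of `x`. -/
def Conn (G : SimpleGraph V) (x u v : V) : Prop := ∃ w : G.Walk u v, x ∉ w.support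

lemma conn_refl {x u : V} (h : u ≠ x) : Conn G x u u :=
  ⟨Walk.nil, by simp [Ne.symm h]⟩

lemma Conn.symm {x u v : V} : Conn G x u v → Conn G x v u := by
  rintro ⟨w, hw⟩; exact ⟨w.reverse, by simpa [Walk.support_reverse] using hw⟩

lemma Conn.trans {x u v w : V} : Conn G x u v → Conn G x v w → Conn G x u w := by
  rintro ⟨p, hp⟩ ⟨q, hq⟩
  exact ⟨p.append q, by rw [Walk.mem_support_append_iff]; tauto⟩

lemma conn_of_eq {x u v : V} (h : u = v) (hu : u ≠ x) : Conn G x u v := by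
  subst h; exact conn_refl hu

/-- the hom attached to an embedding -/
def embHom {g : V → V} (hg : IsEmb G g) : G →g G := ⟨g, fun h => hg.2 _ _ h⟩

lemma Conn.map {g : V → V} (hg : IsEmb G g) {x u v : V} (h : Conn G x u v) :
    Conn G (g x) (g u) (g v) := by
  obtain ⟨w, hw⟩ := h
  refine ⟨w.map (embHom hg), ?_⟩
  show (embHom hg) x ∉ (w.map (embHom hg)).support
  rw [Walk.support_map]
  rintro hmem
  obtain ⟨y, hy, hyx⟩ := List.mem_map.1 hmem
  exact hw (hg.1 hyx ▸ hy)

/-- in a tree, any path's support is contained in any walk's support (same endpoints). -/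
lemma path_support_subset (hT : G.IsTree) {u v : V} {p q : G.Walk u v} (hp : p.IsPath) :
    p.support ⊆ q.support := by
  classical
  obtain ⟨r, -, hr⟩ := hT.existsUnique_path u v
  have h1 : p = r := hr p hp
  have h2 : q.bypass = r := hr q.bypass q.bypass_isPath
  rw [h1, ← h2]
  exact q.support_bypass_subset

lemma conn_reflect (hT : G.IsTree) {g : V → V} (hg : IsEmb G g) {x u v : V}
    (h : Conn G (g x) (g u) (g v)) : Conn G x u v := by
  classical
  obtain ⟨W, hW⟩ := h
  obtain ⟨w0⟩ := hT.isConnected.preconnected u v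
  refine ⟨w0.bypass, fun hx => ?_⟩
  have hmap : (w0.bypass.map (embHom hg)).IsPath :=
    Walk.map_isPath_of_injective (f := embHom hg) hg.1 w0.bypass_isPath
  have hsub := path_support_subset hT (q := W) hmap
  apply hW
  apply hsub
  show (embHom hg) x ∈ (w0.bypass.map (embHom hg)).support
  rw [Walk.support_map]
  exact List.mem_map.2 ⟨x, hx, rfl⟩

end Aux

section Rays

variable {G : SimpleGraph V}

/-- segment of a ray from index `i` to `i+k`. -/
def GRay.walkUp (R : GRay G) (i : ℕ) : (k : ℕ) → G.Walk (R.f i) (R.f (i + k))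
  | 0 => Walk.nil
  | k+1 => (R.walkUp i k).concat (by simpa [Nat.add_assoc] using R.adj (i + k))

lemma GRay.support_walkUp (R : GRay G) (i k : ℕ) :
    (R.walkUp i k).support = (List.range' i (k+1)).map R.f := by
  induction k with
  | zero => simp [GRay.walkUp]
  | succ k ih =>
      rw [GRay.walkUp, Walk.support_concat, ih, List.range'_concat (s := i) (n := k+1)]
      simp [List.concat_eq_append, Nat.add_assoc]

lemma GRay.walkUp_isPath (R : GRay G) (i k : ℕ) : (R.walkUp i k).IsPath := by
  apply Walk.IsPath.mk'
  rw [R.support_walkUp]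
  exact (List.nodup_range' (s := i) (n := k+1)).map R.inj

lemma GRay.mem_support_walkUp_iff (R : GRay G) {i k : ℕ} {y : V} :
    y ∈ (R.walkUp i k).support ↔ ∃ t, i ≤ t ∧ t ≤ i + k ∧ R.f t = y := by
  rw [R.support_walkUp]
  simp only [List.mem_map, List.mem_range'_1]
  constructor
  · rintro ⟨t, ⟨ht1, ht2⟩, rfl⟩; exact ⟨t, by omega, by omega, rfl⟩
  · rintro ⟨t, h1, h2, rfl⟩; exact ⟨t, ⟨by omega, by omega⟩, rfl⟩

/-- a segment of a ray between arbitrary indices `a ≤ b`, with nice endpoints. -/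
def GRay.seg (R : GRay G) (a b : ℕ) (h : a ≤ b) : G.Walk (R.f a) (R.f b) :=
  (R.walkUp a (b - a)).copy rfl (by congr 1; omega)

lemma GRay.mem_support_seg_iff (R : GRay G) {a b : ℕ} (h : a ≤ b) {y : V} :
    y ∈ (R.seg a b h).support ↔ ∃ t, a ≤ t ∧ t ≤ b ∧ R.f t = y := by
  rw [GRay.seg, Walk.support_copy, R.mem_support_walkUp_iff]
  constructor
  · rintro ⟨t, h1, h2, rfl⟩; exact ⟨t, h1, by omega, rfl⟩
  · rintro ⟨t, h1, h2, rfl⟩; exact ⟨t, h1, by omega, rfl⟩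

lemma GRay.seg_isPath (R : GRay G) {a b : ℕ} (h : a ≤ b) : (R.seg a b h).IsPath := by
  have := R.walkUp_isPath a (b - a)
  rw [Walk.isPath_def] at this ⊢
  rwa [GRay.seg, Walk.support_copy]

/-- key separation: in a tree, every walk between two ray vertices passes through all
intermediate ray vertices. -/
lemma ray_sep (hT : G.IsTree) (R : GRay G) {a t b : ℕ} (h1 : a ≤ t) (h2 : t ≤ b)
    (w : G.Walk (R.f a) (R.f b)) : R.f t ∈ w.support := by
  have hab : a ≤ b := le_trans h1 h2
  have := path_support_subset hT (q := w) (R.seg_isPath hab)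
  exact this ((R.mem_support_seg_iff hab).2 ⟨t, h1, h2, rfl⟩)

/-- tail of a ray lying in the complement of `x` gives connections. -/
lemma conn_tail {R : GRay G} {x : V} {N a b : ℕ} (hx : ∀ i, N ≤ i → R.f i ≠ x)
    (ha : N ≤ a) (hb : N ≤ b) : Conn G x (R.f a) (R.f b) := by
  rcases le_total a b with h | h
  · refine ⟨R.seg a b h, fun hc => ?_⟩
    obtain ⟨t, h1, h2, h3⟩ := (R.mem_support_seg_iff h).1 hc
    exact hx t (le_trans ha h1) h3
  · refine Conn.symm ⟨R.seg b a h, fun hc => ?_⟩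
    obtain ⟨t, h1, h2, h3⟩ := (R.mem_support_seg_iff h).1 hc
    exact hx t (le_trans hb h1) h3

lemma exists_tail_ne (R : GRay G) (x : V) : ∃ N, ∀ i, N ≤ i → R.f i ≠ x := by
  by_contra h
  push_neg at h
  obtain ⟨i, -, hi⟩ := h 0
  obtain ⟨j, hj, hj2⟩ := h (i+1)
  exact absurd (R.inj (hi.trans hj2.symm)) (by omega)

lemma exists_tail_notmem (R : GRay G) (l : List V) : ∃ N, ∀ i, N ≤ i → R.f i ∉ l := by
  induction l with
  | nil => exact ⟨0, by simp⟩
  | cons a l ih =>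
      obtain ⟨N1, h1⟩ := ih
      obtain ⟨N2, h2⟩ := exists_tail_ne R a
      exact ⟨max N1 N2, fun i hi => by
        simp only [List.mem_cons, not_or]
        exact ⟨h2 i (le_trans (le_max_right _ _) hi), h1 i (le_trans (le_max_left _ _) hi)⟩⟩

/-- pigeonhole: in any window of length `l.length + 1` some ray vertex avoids `l`. -/
lemma exists_good_index (R : GRay G) (l : List V) (a : ℕ) :
    ∃ j, a ≤ j ∧ j ≤ a + l.length ∧ R.f j ∉ l := by
  classical
  by_contra h
  push_neg at h
  have hinj : Set.InjOn R.f (Finset.Icc a (a + l.length)) := fun x _ y _ hxy => R.inj hxy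
  have hmaps : ∀ j ∈ Finset.Icc a (a + l.length), R.f j ∈ l.toFinset := by
    intro j hj
    rw [Finset.mem_Icc] at hj
    exact List.mem_toFinset.2 (h j hj.1 hj.2)
  have hcard := Finset.card_le_card_of_injOn R.f hmaps hinj
  rw [Nat.card_Icc] at hcard
  have := l.toFinset_card_le
  omega

end Rays

section Comp

variable {G : SimpleGraph V}

lemma InComp.conn {x w w' : V} {R : GRay G} (h : InComp G x R w) (hc : Conn G x w' w) :
    InComp G x R w' := by
  obtain ⟨m, hm, p, hp⟩ := h
  obtain ⟨q, hq⟩ := hc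
  exact ⟨m, hm, q.append p, by rw [Walk.mem_support_append_iff]; tauto⟩

lemma incomp_ray {x : V} {R : GRay G} {N a : ℕ} (hx : ∀ i, N ≤ i → R.f i ≠ x) (ha : N ≤ a) :
    InComp G x R (R.f a) :=
  ⟨a, fun i hi => hx i (le_trans ha hi), Walk.nil, by
    simp only [Walk.support_nil, List.mem_singleton]
    exact fun h => hx a ha h.symm⟩

lemma incomp_step (hT : G.IsTree) {R : GRay G} {j : ℕ} {w : V}
    (h : InComp G (R.f (j+1)) R w) : InComp G (R.f j) R w := by
  obtain ⟨m, hm, p, hp⟩ := h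
  classical
  have hmj : j + 2 ≤ m := by
    by_contra hc
    push_neg at hc
    rcases Nat.lt_or_ge m (j+1) with h' | h'
    · exact hm (j+1) (by omega) rfl
    · have : m = j + 1 := by omega
      exact hm m le_rfl (by rw [this])
  have hpj : R.f j ∉ p.support := by
    intro hmem
    have hdrop := p.dropUntil (R.f j) hmem
    have : R.f (j+1) ∈ (p.dropUntil (R.f j) hmem).support :=
      ray_sep hT R (by omega) (by omega) _
    exact hp (p.support_dropUntil_subset hmem this)
  refine ⟨m, fun i hi hie => ?_, p, hpj⟩
  exact absurd (R.inj hie) (by omega)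

lemma incomp_mono (hT : G.IsTree) {R : GRay G} {j n : ℕ} {w : V} (hjn : j ≤ n)
    (h : InComp G (R.f n) R w) : InComp G (R.f j) R w := by
  induction n, hjn using Nat.le_induction with
  | base => exact h
  | succ n hn ih => exact ih (incomp_step hT h)

/-- map a ray forward by an embedding. -/
def GRay.map {g : V → V} (hg : IsEmb G g) (R : GRay G) : GRay G :=
  ⟨g ∘ R.f, hg.1.comp R.inj, fun n => hg.2 _ _ (R.adj n)⟩

@[simp] lemma GRay.map_f {g : V → V} (hg : IsEmb G g) (R : GRay G) (n : ℕ) :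
    (R.map hg).f n = g (R.f n) := rfl

lemma InComp.map {g : V → V} (hg : IsEmb G g) {x w : V} {R : GRay G}
    (h : InComp G x R w) : InComp G (g x) (R.map hg) (g w) := by
  obtain ⟨m, hm, p, hp⟩ := h
  refine ⟨m, fun i hi hie => hm i hi (hg.1 hie), ?_⟩
  obtain ⟨q, hq⟩ := Conn.map hg (x := x) (u := w) (v := R.f m) ⟨p, hp⟩
  exact ⟨q, hq⟩

/-- the end of `S` lies in the component of `G - x` on the `R` side. -/
def EndIn (G : SimpleGraph V) (x : V) (R S : GRay G) : Prop :=
  ∃ N, (∀ i, N ≤ i → S.f i ≠ x) ∧ InComp G x R (S.f N)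

lemma RayEquiv.symm {R S : GRay G} (h : RayEquiv G R S) : RayEquiv G S R := by
  intro v
  obtain ⟨m, n, h1, h2, w, hw⟩ := h v
  exact ⟨n, m, h2, h1, w.reverse, by simpa [Walk.support_reverse] using hw⟩

lemma RayEquiv.conn {R S : GRay G} (h : RayEquiv G R S) (x : V) :
    ∃ m n, (∀ i, m ≤ i → R.f i ≠ x) ∧ (∀ j, n ≤ j → S.f j ≠ x) ∧
      Conn G x (R.f m) (S.f n) := by
  obtain ⟨m, n, h1, h2, w, hw⟩ := h x
  exact ⟨m, n, h1, h2, w, hw⟩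

/-- connect two tail vertices when avoidance bounds may differ. -/
lemma conn_tail' {R : GRay G} {x : V} {a b : ℕ}
    (ha : ∀ i, a ≤ i → R.f i ≠ x) (hb : ∀ i, b ≤ i → R.f i ≠ x) :
    Conn G x (R.f a) (R.f b) := by
  rcases le_total a b with h | h
  · exact conn_tail ha le_rfl h
  · exact conn_tail hb h le_rfl

lemma RayEquiv.trans {R S T : GRay G} (h1 : RayEquiv G R S) (h2 : RayEquiv G S T) :
    RayEquiv G R T := by
  intro v
  obtain ⟨m, n, a1, a2, w1⟩ := h1.conn v
  obtain ⟨n', t, b1, b2, w2⟩ := h2.conn v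
  obtain ⟨w, hw⟩ := (w1.trans (conn_tail' a2 b1)).trans w2
  exact ⟨m, t, a1, b2, w, hw⟩

/-- `EndIn` only depends on the equivalence class of `S`. -/
lemma EndIn.congr {x : V} {R S S' : GRay G} (h : EndIn G x R S) (he : RayEquiv G S S') :
    EndIn G x R S' := by
  obtain ⟨N, hN, hin⟩ := h
  obtain ⟨m, n, a1, a2, wc⟩ := he.conn x
  refine ⟨n, a2, ?_⟩
  exact (hin.conn (conn_tail' a1 hN)).conn wc.symm

/-- `InComp` only depends on the equivalence class of `R`. -/
lemma InComp.congr {x w : V} {R R' : GRay G} (h : InComp G x R w) (he : RayEquiv G R R') :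
    InComp G x R' w := by
  obtain ⟨m, hm, p, hp⟩ := h
  obtain ⟨m', n', a1, a2, wc⟩ := he.conn x
  obtain ⟨q, hq⟩ := (Conn.trans ⟨p, hp⟩ (conn_tail' hm a1)).trans wc
  exact ⟨n', a2, q, hq⟩

lemma InLimitSet.congr {M : Set (V → V)} {v0 : V} {R R' : GRay G}
    (h : InLimitSet G M v0 R) (he : RayEquiv G R R') : InLimitSet G M v0 R' := by
  intro x
  obtain ⟨g, hg, hin⟩ := h x
  exact ⟨g, hg, hin.congr he⟩

/-- shifting a ray. -/
def GRay.shift (R : GRay G) (N : ℕ) : GRay G :=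
  ⟨fun i => R.f (i + N), fun a b hab => by
      have := R.inj hab; omega, fun n => by
      have := R.adj (n + N); simpa [Nat.add_right_comm] using this⟩

@[simp] lemma GRay.shift_f (R : GRay G) (N i : ℕ) : (R.shift N).f i = R.f (i + N) := rfl

lemma rayEquiv_shift (R : GRay G) (N : ℕ) : RayEquiv G R (R.shift N) := by
  intro v
  obtain ⟨M0, hM0⟩ := exists_tail_ne R v
  refine ⟨M0 + N, M0, fun i hi => hM0 i (by omega), fun j hj => hM0 (j + N) (by omega), ?_⟩
  refine ⟨Walk.nil.copy rfl (by simp [Nat.add_comm]), ?_⟩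
  simp only [Walk.support_copy, Walk.support_nil, List.mem_singleton]
  exact fun h => hM0 (M0 + N) (by omega) h.symm

/-- rays sharing arbitrarily deep vertices are equivalent. -/
lemma rayEquiv_of_deep_meets {R S : GRay G}
    (h : ∀ N, ∃ i j, N ≤ i ∧ N ≤ j ∧ R.f i = S.f j) : RayEquiv G R S := by
  intro v
  obtain ⟨M0, hM0⟩ := exists_tail_ne R v
  obtain ⟨N0, hN0⟩ := exists_tail_ne S v
  obtain ⟨i, j, hi, hj, hij⟩ := h (max M0 N0)
  refine ⟨i, j, fun i' hi' => hM0 i' (by omega), fun j' hj' => hN0 j' (by omega), ?_⟩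
  refine ⟨Walk.nil.copy rfl hij, ?_⟩
  simp only [Walk.support_copy, Walk.support_nil, List.mem_singleton]
  exact fun h' => hM0 i (by omega) h'.symm

lemma exists_disjoint_tails {R S : GRay G} (h : ¬ RayEquiv G R S) :
    ∃ N, ∀ i j, N ≤ i → N ≤ j → R.f i ≠ S.f j := by
  by_contra hc
  push_neg at hc
  exact h (rayEquiv_of_deep_meets fun N => by
    obtain ⟨i, j, hi, hj, hij⟩ := hc N
    exact ⟨i, j, hi, hj, hij⟩)

/-- an embedding reflects equivalence of rays. -/
lemma rayEquiv_reflect (hT : G.IsTree) {g : V → V} (hg : IsEmb G g) {R S : GRay G}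
    (h : RayEquiv G (R.map hg) (S.map hg)) : RayEquiv G R S := by
  intro v
  obtain ⟨m, n, a1, a2, wc⟩ := h.conn (g v)
  refine ⟨m, n, fun i hi hie => a1 i hi (by simpa using congrArg g hie),
    fun j hj hje => a2 j hj (by simpa using congrArg g hje), ?_⟩
  exact conn_reflect hT hg wc

end Comp

section Invariance

variable {G : SimpleGraph V}

/-- the limit set is invariant under the monoid. -/
lemma inLimitSet_map (hT : G.IsTree) {M : Set (V → V)} (hM : IsEmbMonoid G M) {v0 : V}
    {g : V → V} (hgM : g ∈ M) (hg : IsEmb G g) {R : GRay G}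
    (hR : InLimitSet G M v0 R) : InLimitSet G M v0 (R.map hg) := by
  intro x
  classical
  by_cases hx : x ∈ Set.range g
  · obtain ⟨u, rfl⟩ := hx
    obtain ⟨h, hhM, hin⟩ := hR u
    refine ⟨g ∘ h, hM.2.2 g hgM h hhM, ?_⟩
    exact hin.map hg
  · -- `x` is not in the image, the whole image tree avoids `x`
    refine ⟨g, hgM, 0, fun i _ hie => hx ⟨R.f i, hie⟩, ?_⟩
    obtain ⟨w0⟩ := hT.isConnected.preconnected v0 (R.f 0)
    refine ⟨w0.map (embHom hg), fun hmem => ?_⟩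
    change x ∈ (w0.map (embHom hg)).support at hmem
    rw [Walk.support_map] at hmem
    obtain ⟨y, -, hy⟩ := List.mem_map.1 hmem
    exact hx ⟨y, hy⟩

/-- Lemma B: if `S` is not equivalent to `R`, then deep components on the `R` side
do not contain the end of `S`. -/
lemma sep_bound (hT : G.IsTree) {R S : GRay G} (h : ¬ RayEquiv G R S) :
    ∃ j0, ∀ j, j0 ≤ j → ¬ EndIn G (R.f j) R S := by
  classical
  simp only [RayEquiv] at h
  push_neg at h
  obtain ⟨v, hv⟩ := h
  -- hv : ∀ m n, tails avoid v → tails avoid v → every walk hits v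
  obtain ⟨M0, hM0⟩ := exists_tail_ne R v
  obtain ⟨N0, hN0⟩ := exists_tail_ne S v
  obtain ⟨w0⟩ := hT.isConnected.preconnected (R.f 0) v
  obtain ⟨j1, hj1⟩ := exists_tail_notmem R w0.support
  refine ⟨j1, fun j hj hEnd => ?_⟩
  obtain ⟨N, hN, m, hm, p, hp⟩ := hEnd
  have hmj : j + 1 ≤ m := by
    by_contra hc
    exact hm j (by omega) rfl
  -- extend to indices beyond the separator bounds
  have c1 : Conn G (R.f j) (S.f (max N N0)) (S.f N) := conn_tail hN (le_max_left _ _) le_rfl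
  have c2 : Conn G (R.f j) (R.f m) (R.f (max m M0)) := conn_tail hm le_rfl (le_max_left _ _)
  obtain ⟨W, hW⟩ := (c1.trans ⟨p, hp⟩).trans c2
  -- the separator property forces `v` on `W.reverse`
  have hvW : v ∈ W.support := by
    have := hv (max m M0) (max N N0) (fun i hi => hM0 i (by omega))
      (fun i hi => hN0 i (by omega)) W.reverse
    simpa [Walk.support_reverse] using this
  -- drop until `v`, giving a walk from `v` to `R.f (max m M0)` avoiding `R.f j`
  have hdropsub := W.support_dropUntil_subset hvW
  set W2 := W.dropUntil v hvW with hW2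
  -- now `w0.append W2 : R.f 0 → R.f (max m M0)` misses `R.f j`: contradiction with ray_sep
  have hsep := ray_sep hT R (Nat.zero_le j) (by omega : j ≤ max m M0) (w0.append W2)
  rw [Walk.mem_support_append_iff] at hsep
  rcases hsep with hsep | hsep
  · exact hj1 j hj hsep
  · exact hW (hdropsub hsep)
end Invariance

section Grow

variable {G : SimpleGraph V}

/-- choosing between the two surviving candidate image rays. -/
lemma pick_survivor (hT : G.IsTree) {M : Set (V → V)} (hM : IsEmbMonoid G M) {v0 : V}
    {g : V → V} (hgM : g ∈ M) (hg : IsEmb G g) (ρ : GRay G) (j : ℕ)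
    (hbase : InComp G (ρ.f j) ρ (g v0))
    (A B : GRay G) (wA : G.Walk v0 (A.f 0)) (wB : G.Walk v0 (B.f 0))
    (hLA : InLimitSet G M v0 A) (hLB : InLimitSet G M v0 B)
    (hAB : ¬ RayEquiv G A B)
    (hgoodA : ρ.f j ∉ (wA.map (embHom hg)).support)
    (hgoodB : ρ.f j ∉ (wB.map (embHom hg)).support)
    (hPA : ¬ ∃ t, g (A.f t) = ρ.f j) (hPB : ¬ ∃ t, g (B.f t) = ρ.f j) :
    ∃ S : GRay G, InLimitSet G M v0 S ∧ EndIn G (ρ.f j) ρ S ∧ ¬ RayEquiv G S ρ := by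
  push_neg at hPA hPB
  have hEndA : EndIn G (ρ.f j) ρ (A.map hg) :=
    ⟨0, fun i _ => hPA i, hbase.conn (Conn.symm ⟨wA.map (embHom hg), hgoodA⟩)⟩
  have hEndB : EndIn G (ρ.f j) ρ (B.map hg) :=
    ⟨0, fun i _ => hPB i, hbase.conn (Conn.symm ⟨wB.map (embHom hg), hgoodB⟩)⟩
  have hUAB : ¬ RayEquiv G (A.map hg) (B.map hg) := fun h => hAB (rayEquiv_reflect hT hg h)
  by_cases hc : RayEquiv G (A.map hg) ρ
  · refine ⟨B.map hg, inLimitSet_map hT hM hgM hg hLB, hEndB, fun hc' => ?_⟩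
    exact hUAB (hc.trans hc'.symm)
  · exact ⟨A.map hg, inLimitSet_map hT hM hgM hg hLA, hEndA, hc⟩

/-- the main growing lemma: given at least 3 pairwise inequivalent limit rays,
there is a limit ray inequivalent to all given ones. -/
lemma grow (hT : G.IsTree) {M : Set (V → V)} (hM : IsEmbMonoid G M) {v0 : V}
    {m : ℕ} (hm3 : 3 ≤ m) (F : Fin m → GRay G)
    (hL : ∀ i, InLimitSet G M v0 (F i))
    (hne : ∀ i j, i ≠ j → ¬ RayEquiv G (F i) (F j)) :
    ∃ S : GRay G, InLimitSet G M v0 S ∧ ∀ i, ¬ RayEquiv G S (F i) := by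
  classical
  set i0 : Fin m := ⟨0, by omega⟩
  set i1 : Fin m := ⟨1, by omega⟩
  set i2 : Fin m := ⟨2, by omega⟩
  have h01 : i0 ≠ i1 := by simp [i0, i1, Fin.ext_iff]
  have h02 : i0 ≠ i2 := by simp [i0, i2, Fin.ext_iff]
  have h12 : i1 ≠ i2 := by simp [i1, i2, Fin.ext_iff]
  obtain ⟨N01, hN01⟩ := exists_disjoint_tails (hne i0 i1 h01)
  obtain ⟨N02, hN02⟩ := exists_disjoint_tails (hne i0 i2 h02)
  obtain ⟨N12, hN12⟩ := exists_disjoint_tails (hne i1 i2 h12)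
  set N := max (max N01 N02) N12 with hN
  set T0 := (F i0).shift N
  set T1 := (F i1).shift N
  set T2 := (F i2).shift N
  have he0 : RayEquiv G (F i0) T0 := rayEquiv_shift _ N
  have he1 : RayEquiv G (F i1) T1 := rayEquiv_shift _ N
  have he2 : RayEquiv G (F i2) T2 := rayEquiv_shift _ N
  have hd01 : ∀ p q, T0.f p ≠ T1.f q := fun p q => hN01 (p+N) (q+N) (by omega) (by omega)
  have hd02 : ∀ p q, T0.f p ≠ T2.f q := fun p q => hN02 (p+N) (q+N) (by omega) (by omega)
  have hd12 : ∀ p q, T1.f p ≠ T2.f q := fun p q => hN12 (p+N) (q+N) (by omega) (by omega)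
  have hT0L : InLimitSet G M v0 T0 := (hL i0).congr he0
  have hT1L : InLimitSet G M v0 T1 := (hL i1).congr he1
  have hT2L : InLimitSet G M v0 T2 := (hL i2).congr he2
  have hne01 : ¬ RayEquiv G T0 T1 := fun h => hne i0 i1 h01 ((he0.trans h).trans he1.symm)
  have hne02 : ¬ RayEquiv G T0 T2 := fun h => hne i0 i2 h02 ((he0.trans h).trans he2.symm)
  have hne12 : ¬ RayEquiv G T1 T2 := fun h => hne i1 i2 h12 ((he1.trans h).trans he2.symm)
  -- separation bounds for all old rays against the reference ray T0
  have hbound : ∀ i : Fin m, ∃ j0, ∀ j, j0 ≤ j → i ≠ i0 → ¬ EndIn G (T0.f j) T0 (F i) := by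
    intro i
    by_cases hi : i = i0
    · exact ⟨0, fun j _ hii => absurd hi hii⟩
    · have hnei : ¬ RayEquiv G T0 (F i) := fun h => hne i0 i (Ne.symm hi) (he0.trans h)
      obtain ⟨j0, hj0⟩ := sep_bound hT hnei
      exact ⟨j0, fun j hj _ => hj0 j hj⟩
  choose bound hboundspec using hbound
  set jstar := Finset.univ.sup bound with hjstar
  have hjb : ∀ i, bound i ≤ jstar := fun i => Finset.le_sup (Finset.mem_univ i)
  -- fixed walks from the base point to the starts of the three rays
  obtain ⟨w0⟩ := hT.isConnected.preconnected v0 (T0.f 0)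
  obtain ⟨w1⟩ := hT.isConnected.preconnected v0 (T1.f 0)
  obtain ⟨w2⟩ := hT.isConnected.preconnected v0 (T2.f 0)
  set B := w0.support.length + w1.support.length + w2.support.length with hB
  -- get an orbit point deep inside the T0 side
  obtain ⟨g, hgM, hin⟩ := hT0L (T0.f (jstar + B))
  have hg : IsEmb G g := hM.1 g hgM
  -- a good index avoiding the three image walks
  set l := (w0.map (embHom hg)).support ++ (w1.map (embHom hg)).support ++
    (w2.map (embHom hg)).support with hl
  have hllen : l.length = B := by
    simp only [hl, hB, List.length_append, Walk.support_map, List.length_map]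
  obtain ⟨j, hj1, hj2, hj3⟩ := exists_good_index T0 l jstar
  rw [hllen] at hj2
  simp only [hl, List.mem_append, not_or] at hj3
  obtain ⟨⟨hg0, hg1⟩, hg2⟩ := hj3
  have hbase : InComp G (T0.f j) T0 (g v0) := incomp_mono hT (by omega) hin
  -- at most one of the three disjoint rays can map onto `T0.f j`
  have hsurv : (¬ (∃ t, g (T1.f t) = T0.f j) ∧ ¬ (∃ t, g (T2.f t) = T0.f j)) ∨
      (¬ (∃ t, g (T0.f t) = T0.f j) ∧ ¬ (∃ t, g (T1.f t) = T0.f j)) ∨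
      (¬ (∃ t, g (T0.f t) = T0.f j) ∧ ¬ (∃ t, g (T2.f t) = T0.f j)) := by
    have k01 : ¬((∃ t, g (T0.f t) = T0.f j) ∧ (∃ t, g (T1.f t) = T0.f j)) := by
      rintro ⟨⟨a, ha⟩, ⟨b, hb⟩⟩; exact hd01 a b (hg.1 (ha.trans hb.symm))
    have k02 : ¬((∃ t, g (T0.f t) = T0.f j) ∧ (∃ t, g (T2.f t) = T0.f j)) := by
      rintro ⟨⟨a, ha⟩, ⟨b, hb⟩⟩; exact hd02 a b (hg.1 (ha.trans hb.symm))
    have k12 : ¬((∃ t, g (T1.f t) = T0.f j) ∧ (∃ t, g (T2.f t) = T0.f j)) := by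
      rintro ⟨⟨a, ha⟩, ⟨b, hb⟩⟩; exact hd12 a b (hg.1 (ha.trans hb.symm))
    tauto
  -- apply the survivor picking in each of the three cases
  have hmain : ∃ S : GRay G, InLimitSet G M v0 S ∧ EndIn G (T0.f j) T0 S ∧
      ¬ RayEquiv G S T0 := by
    rcases hsurv with ⟨hPA, hPB⟩ | ⟨hPA, hPB⟩ | ⟨hPA, hPB⟩
    · exact pick_survivor hT hM hgM hg T0 j hbase T1 T2 w1 w2 hT1L hT2L hne12 hg1 hg2 hPA hPB
    · exact pick_survivor hT hM hgM hg T0 j hbase T0 T1 w0 w1 hT0L hT1L hne01 hg0 hg1 hPA hPB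
    · exact pick_survivor hT hM hgM hg T0 j hbase T0 T2 w0 w2 hT0L hT2L hne02 hg0 hg2 hPA hPB
  obtain ⟨S, hSL, hSEnd, hST0⟩ := hmain
  refine ⟨S, hSL, fun i => ?_⟩
  by_cases hi : i = i0
  · subst hi
    exact fun h => hST0 (h.trans he0)
  · intro h
    exact hboundspec i j (le_trans (hjb i) hj1) hi (hSEnd.congr h)
end Grow


theorem stmt12 (G : SimpleGraph V) (hT : G.IsTree) (M : Set (V → V))
    (hM : IsEmbMonoid G M) (v0 : V)
    (h3 : ∃ R1 R2 R3 : GRay G, InLimitSet G M v0 R1 ∧ InLimitSet G M v0 R2 ∧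
      InLimitSet G M v0 R3 ∧ ¬ RayEquiv G R1 R2 ∧ ¬ RayEquiv G R1 R3 ∧ ¬ RayEquiv G R2 R3) :
    ∀ k : ℕ, ∃ F : Fin k → GRay G, (∀ i, InLimitSet G M v0 (F i)) ∧
      ∀ i j, i ≠ j → ¬ RayEquiv G (F i) (F j) := by
  obtain ⟨R1, R2, R3, hL1, hL2, hL3, h12, h13, h23⟩ := h3
  have main : ∀ d : ℕ, ∃ F : Fin (3 + d) → GRay G, (∀ i, InLimitSet G M v0 (F i)) ∧
      ∀ i j, i ≠ j → ¬ RayEquiv G (F i) (F j) := by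
    intro d
    induction d with
    | zero =>
        refine ⟨![R1, R2, R3], ?_, ?_⟩
        · intro i; fin_cases i <;> assumption
        · intro i j hij
          fin_cases i <;> fin_cases j <;>
            first
            | exact absurd rfl hij
            | assumption
            | exact fun h => h12 h.symm
            | exact fun h => h13 h.symm
            | exact fun h => h23 h.symm
    | succ d ih =>
        obtain ⟨F, hL, hne⟩ := ih
        obtain ⟨S, hSL, hSne⟩ := grow hT hM (by omega) F hL hne
        refine ⟨Fin.snoc F S, ?_, ?_⟩
        · intro i
          refine Fin.lastCases ?_ ?_ i
          · simpa using hSL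
          · intro i; simpa using hL i
        · intro i j hij
          rcases Fin.eq_castSucc_or_eq_last i with ⟨i', rfl⟩ | rfl <;>
            rcases Fin.eq_castSucc_or_eq_last j with ⟨j', rfl⟩ | rfl
          · simp only [Fin.snoc_castSucc]
            refine hne i' j' fun h => hij (by rw [h])
          · simp only [Fin.snoc_last, Fin.snoc_castSucc]
            exact fun h => hSne i' h.symm
          · simp only [Fin.snoc_last, Fin.snoc_castSucc]
            exact hSne j'
          · exact absurd rfl hij
  intro k
  obtain ⟨F, hL, hne⟩ := main k
  refine ⟨fun i => F (Fin.castLE (by omega) i), fun i => hL _, fun i j hij => ?_⟩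
  refine hne _ _ fun h => hij ?_
  have := congrArg Fin.val h
  simpa [Fin.ext_iff] using this
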